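/- arXiv:2007.11570 — 8 statements merged into one kernel-verified Lean document; each statement's English description precedes it below -/
import Mathlib

section
/- If k ≥ 2, the undirected graph X_f is connected: for every pair of vertices y, z ∈ K_f there is a finite sequence of vertices starting at y and ending at z in which consecutive vertices are adjacent in X_f. -/
open Polynomial

/-- If `k ≥ 2`, the undirected graph `X_f` is connected. -/
theorem stmt_2 (p k : ℕ) [Fact p.Prime] (f : (ZMod p)[X]) [Fact (Irreducible f)]
    (hmonic : f.Monic) (hdeg : f.natDegree = k) (hk : 2 ≤ k) :
    let S : Set (AdjoinRoot f) := {s | ∃ i < k, s = AdjoinRoot.root f ^ p ^ i}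
    let Adj : AdjoinRoot f → AdjoinRoot f → Prop := fun y z =>
      ∃ s ∈ S, z - y = s ∨ y - z = s ∨ (y ≠ 0 ∧ z = s * y) ∨ (z ≠ 0 ∧ y = s * z)
    ∀ y z : AdjoinRoot f, Relation.ReflTransGen Adj y z := by
  intro S Adj y z
  have hk0 : 0 < k := by omega
  set ξ := AdjoinRoot.root f with hξdef
  have hξS : ξ ∈ S := ⟨0, hk0, by simp [hξdef]⟩
  have hξ0 : ξ ≠ 0 := by
    intro h
    have hdvd : f ∣ X := by
      rwa [hξdef, ← AdjoinRoot.mk_X, AdjoinRoot.mk_eq_zero] at h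
    have hle := Polynomial.natDegree_le_of_dvd hdvd Polynomial.X_ne_zero
    rw [Polynomial.natDegree_X, hdeg] at hle
    omega
  -- single additive step
  have hstep : ∀ w : AdjoinRoot f, Adj w (w + ξ) :=
    fun w => ⟨ξ, hξS, Or.inl (by ring)⟩
  -- additive steps by natural multiples of ξ
  have haddn : ∀ (w : AdjoinRoot f) (n : ℕ),
      Relation.ReflTransGen Adj w (w + (n : AdjoinRoot f) * ξ) := by
    intro w n
    induction n with
    | zero => simpa using Relation.ReflTransGen.refl
    | succ n ih =>
        have : w + ((n + 1 : ℕ) : AdjoinRoot f) * ξ = (w + (n : AdjoinRoot f) * ξ) + ξ := by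
          push_cast; ring
        rw [this]
        exact ih.tail (hstep _)
  -- additive steps by ZMod p multiples of ξ
  have hadd : ∀ (w : AdjoinRoot f) (a : ZMod p),
      Relation.ReflTransGen Adj w (w + algebraMap (ZMod p) (AdjoinRoot f) a * ξ) := by
    intro w a
    have h1 : algebraMap (ZMod p) (AdjoinRoot f) a = ((a.val : ℕ) : AdjoinRoot f) := by
      conv_lhs => rw [← ZMod.natCast_rightInverse a]
      exact map_natCast _ _
    rw [h1]
    exact haddn w a.val
  -- multiplicative step
  have hmul : ∀ w : AdjoinRoot f, w ≠ 0 → Adj w (ξ * w) :=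
    fun w hw => ⟨ξ, hξS, Or.inr (Or.inr (Or.inl ⟨hw, rfl⟩))⟩
  -- everything of the form ξ * q(ξ) is reachable from 0
  have hreach : ∀ q : (ZMod p)[X],
      Relation.ReflTransGen Adj 0 (ξ * Polynomial.aeval ξ q) := by
    intro q
    induction q using Polynomial.recOnHorner with
    | M0 => simpa using Relation.ReflTransGen.refl
    | MC q a _ _ ih =>
        have : ξ * Polynomial.aeval ξ (q + C a)
            = ξ * Polynomial.aeval ξ q + algebraMap (ZMod p) (AdjoinRoot f) a * ξ := by
          simp [mul_add]; ring
        rw [this]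
        exact ih.trans (hadd _ a)
    | MX q hq ih =>
        have heq : ξ * Polynomial.aeval ξ (q * X) = ξ * (ξ * Polynomial.aeval ξ q) := by
          rw [map_mul, Polynomial.aeval_X]; ring
        rw [heq]
        by_cases h0 : ξ * Polynomial.aeval ξ q = 0
        · rw [h0, mul_zero]
        · exact ih.tail (hmul _ h0)
  -- everything is reachable from 0
  have hreach0 : ∀ w : AdjoinRoot f, Relation.ReflTransGen Adj 0 w := by
    intro w
    obtain ⟨g, hg⟩ := AdjoinRoot.mk_surjective (ξ⁻¹ * w)
    have hg' : Polynomial.aeval ξ g = ξ⁻¹ * w := by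
      rw [AdjoinRoot.aeval_eq]; exact hg
    have := hreach g
    rw [hg', ← mul_assoc, mul_inv_cancel₀ hξ0, one_mul] at this
    exact this
  -- Adj is symmetric
  have hsymm : Symmetric Adj := by
    intro u v ⟨s, hs, h⟩
    exact ⟨s, hs, by tauto⟩
  exact (haveI : Std.Symm Adj := ⟨fun a b h => hsymm h⟩; Std.Symm.symm (r := Relation.ReflTransGen Adj) _ _ (hreach0 y)).trans (hreach0 z)
end

section
/- If k ≥ 2, the directed graph X⃗_f is strongly connected: for every pair of vertices y, z ∈ K_f there is a finite sequence of vertices starting at y and ending at z in which each consecutive pair is joined by a directed edge of X⃗_f in the forward direction. -/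
open Polynomial

/-- If `k ≥ 2`, the directed graph `X⃗_f` is strongly connected. -/
theorem stmt_3 (p k : ℕ) [Fact p.Prime] (f : (ZMod p)[X]) [Fact (Irreducible f)]
    (hmonic : f.Monic) (hdeg : f.natDegree = k) (hk : 2 ≤ k) :
    let S : Set (AdjoinRoot f) := {s | ∃ i < k, s = AdjoinRoot.root f ^ p ^ i}
    let DAdj : AdjoinRoot f → AdjoinRoot f → Prop := fun y z =>
      ∃ s ∈ S, z - y = s ∨ (y ≠ 0 ∧ z * y⁻¹ = s)
    ∀ y z : AdjoinRoot f, Relation.ReflTransGen DAdj y z := by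
  intro S DAdj y z
  set ξ : AdjoinRoot f := AdjoinRoot.root f with hξ
  have hkpos : 0 < k := by omega
  have hξS : ξ ∈ S := ⟨0, hkpos, by simp [hξ]⟩
  -- ξ ≠ 0
  have hfdeg : 1 < f.natDegree := by omega
  have hξne : ξ ≠ 0 := by
    intro h
    have : (AdjoinRoot.mk f) X = 0 := by
      rw [AdjoinRoot.mk_X]; exact h
    have hdvd : f ∣ X := (AdjoinRoot.mk_eq_zero).mp this
    have := Polynomial.natDegree_le_of_dvd hdvd X_ne_zero
    simp [natDegree_X] at this
    omega
  -- basic steps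
  have stepAdd : ∀ x : AdjoinRoot f, Relation.ReflTransGen DAdj x (x + ξ) := by
    intro x
    exact Relation.ReflTransGen.single ⟨ξ, hξS, Or.inl (by ring)⟩
  have stepMul : ∀ x : AdjoinRoot f, Relation.ReflTransGen DAdj x (x * ξ) := by
    intro x
    by_cases hx : x = 0
    · rw [hx, zero_mul]
    · exact Relation.ReflTransGen.single ⟨ξ, hξS, Or.inr ⟨hx, by
        field_simp⟩⟩
  have stepAddNat : ∀ (x : AdjoinRoot f) (n : ℕ),
      Relation.ReflTransGen DAdj x (x + (n : ZMod p) • ξ) := by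
    intro x n
    induction n with
    | zero => simpa using Relation.ReflTransGen.refl
    | succ m ih =>
        have := (ih.trans (stepAdd (x + (m : ZMod p) • ξ)))
        have he : x + ((m : ZMod p)) • ξ + ξ = x + (((m + 1 : ℕ) : ZMod p)) • ξ := by
          push_cast
          rw [add_smul, one_smul]
          ring_nf
        rwa [he] at this
  have stepAddC : ∀ (x : AdjoinRoot f) (c : ZMod p),
      Relation.ReflTransGen DAdj x (x + c • ξ) := by
    intro x c
    have := stepAddNat x c.val
    rwa [ZMod.natCast_val, ZMod.cast_id] at this
  -- Horner scheme
  have horner : ∀ n : ℕ, ∀ (x : AdjoinRoot f) (q : (ZMod p)[X]), q.natDegree < n →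
      Relation.ReflTransGen DAdj x (x * ξ ^ n + (aeval ξ q) * ξ) := by
    intro n
    induction n with
    | zero => intro x q hq; omega
    | succ m ih =>
        intro x q hq
        by_cases hm : m = 0
        · subst hm
          have hq0 : q = C (q.coeff 0) := Polynomial.eq_C_of_natDegree_eq_zero (by omega)
          have := stepAddC (x * ξ) (q.coeff 0)
          have h2 := (stepMul x).trans this
          have he : x * ξ + q.coeff 0 • ξ = x * ξ ^ 1 + aeval ξ q * ξ := by
            rw [hq0]
            simp [Algebra.smul_def]
          rwa [he] at h2
        · have hdiv : q.divX.natDegree < m := by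
            have h1 := Polynomial.natDegree_divX_eq_natDegree_tsub_one (p := q)
            omega
          have h1 := ih x q.divX hdiv
          have h2 := stepMul (x * ξ ^ m + aeval ξ q.divX * ξ)
          have h3 := h2.trans (stepAddC _ (q.coeff 0))
          have he : (x * ξ ^ m + aeval ξ q.divX * ξ) * ξ + q.coeff 0 • ξ
              = x * ξ ^ (m + 1) + aeval ξ q * ξ := by
            conv_rhs => rw [← Polynomial.divX_mul_X_add q]
            simp [Algebra.smul_def, pow_succ]
            ring
          rw [he] at h3
          exact h1.trans h3
  -- Now the main argument
  have hfne : f ≠ 0 := hmonic.ne_zero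
  haveI : Fact (Irreducible f) := inferInstance
  obtain ⟨q, hqdeg, hq⟩ := (AdjoinRoot.powerBasis hfne).exists_eq_aeval ((z - y * ξ ^ k) * ξ⁻¹)
  have hqdeg' : q.natDegree < k := by
    have hd : (AdjoinRoot.powerBasis hfne).dim = k := hdeg
    omega
  have hgen : (AdjoinRoot.powerBasis hfne).gen = ξ := rfl
  have h := horner k y q hqdeg'
  have he : y * ξ ^ k + aeval ξ q * ξ = z := by
    rw [hgen] at hq
    rw [← hq]
    field_simp
    ring
  rwa [he] at h
end

section
/- If k ≥ 2, the diameter of X_f is less than 2p(2k+1) − 2k − 4: for all y, z ∈ K_f there exist n < 2p(2k+1) − 2k − 4 and a sequence c_0 = y, c_1, …, c_n = z of vertices with c_i adjacent to c_{i+1} in X_f for all i. -/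
open Polynomial

section Paths

variable {V : Type*} (Adj : V → V → Prop)

/-- There is a walk of length `n` from `a` to `b`. -/
def ReachN (a b : V) (n : ℕ) : Prop :=
  ∃ c : ℕ → V, c 0 = a ∧ c n = b ∧ ∀ i < n, Adj (c i) (c (i + 1))

lemma reachN_refl (a : V) : ReachN Adj a a 0 :=
  ⟨fun _ => a, rfl, rfl, fun i h => absurd h (Nat.not_lt_zero i)⟩

lemma reachN_single {a b : V} (h : Adj a b) : ReachN Adj a b 1 := by
  refine ⟨fun i => if i = 0 then a else b, by simp, by simp, ?_⟩
  intro i hi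
  interval_cases i
  simpa using h

lemma reachN_trans {a b c : V} {n m : ℕ} (h1 : ReachN Adj a b n)
    (h2 : ReachN Adj b c m) : ReachN Adj a c (n + m) := by
  obtain ⟨f1, hf10, hf1n, hf1⟩ := h1
  obtain ⟨f2, hf20, hf2m, hf2⟩ := h2
  refine ⟨fun i => if i < n then f1 i else f2 (i - n), ?_, ?_, ?_⟩
  · by_cases h : 0 < n
    · simp [h, hf10]
    · have hn : n = 0 := by omega
      have h2 : f2 0 = a := by rw [hf20, ← hf1n, hn, hf10]
      simp [hn, h2]
  · have h : ¬ (n + m < n) := by omega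
    simp only [if_neg h, Nat.add_sub_cancel_left, hf2m]
  · intro i hi
    by_cases h : i + 1 < n
    · have h' : i < n := by omega
      simpa only [if_pos h, if_pos h'] using hf1 i h'
    · by_cases h' : i < n
      · have hn : i + 1 = n := by omega
        have he : f2 (i + 1 - n) = f1 (i + 1) := by
          rw [hn, Nat.sub_self, hf20, ← hf1n]
        simp only [if_pos h', if_neg h, he]
        exact hf1 i h'
      · have hi' : i - n < m := by omega
        have e1 : i + 1 - n = (i - n) + 1 := by omega
        simp only [if_neg h, if_neg h', e1]
        exact hf2 _ hi'

lemma reachN_symm (hsymm : ∀ x y, Adj x y → Adj y x) {a b : V} {n : ℕ}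
    (h : ReachN Adj a b n) : ReachN Adj b a n := by
  obtain ⟨c, hc0, hcn, hc⟩ := h
  refine ⟨fun i => c (n - i), by simpa using hcn, by simpa using hc0, ?_⟩
  intro i hi
  have h1 : n - i = (n - (i + 1)) + 1 := by omega
  have h2 := hc (n - (i + 1)) (by omega)
  simp only []
  rw [h1]
  exact hsymm _ _ h2

end Paths

section Main

variable (p k : ℕ) (f : (ZMod p)[X])

/-- The adjacency relation of `X_f`. -/
def theAdj : AdjoinRoot f → AdjoinRoot f → Prop := fun y z =>
  ∃ s ∈ ({s | ∃ i < k, s = AdjoinRoot.root f ^ p ^ i} : Set (AdjoinRoot f)),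
    z - y = s ∨ y - z = s ∨ (y ≠ 0 ∧ z = s * y) ∨ (z ≠ 0 ∧ y = s * z)

lemma theAdj_symm : ∀ x y, theAdj p k f x y → theAdj p k f y x := by
  intro x y ⟨s, hs, h⟩
  exact ⟨s, hs, by tauto⟩

lemma root_mem_S (hk0 : 0 < k) :
    AdjoinRoot.root f ∈ ({s | ∃ i < k, s = AdjoinRoot.root f ^ p ^ i} :
      Set (AdjoinRoot f)) :=
  ⟨0, hk0, by simp⟩

lemma adj_add_root (hk0 : 0 < k) (v : AdjoinRoot f) :
    theAdj p k f v (v + AdjoinRoot.root f) :=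
  ⟨AdjoinRoot.root f, root_mem_S p k f hk0, Or.inl (add_sub_cancel_left v _)⟩

lemma adj_mul_root (hk0 : 0 < k) (u : AdjoinRoot f) (hu : u ≠ 0) :
    theAdj p k f u (AdjoinRoot.root f * u) :=
  ⟨AdjoinRoot.root f, root_mem_S p k f hk0, Or.inr (Or.inr (Or.inl ⟨hu, rfl⟩))⟩

lemma reach_add_nsmul (hk0 : 0 < k) (v : AdjoinRoot f) (j : ℕ) :
    ReachN (theAdj p k f) v (v + j • AdjoinRoot.root f) j := by
  induction j with
  | zero => simpa using reachN_refl _ v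
  | succ j ih =>
    have he : v + (j + 1) • AdjoinRoot.root f
        = (v + j • AdjoinRoot.root f) + AdjoinRoot.root f := by
      rw [succ_nsmul, add_assoc]
    rw [he]
    exact reachN_trans _ ih (reachN_single _ (adj_add_root p k f hk0 _))

lemma reach_sum [Fact p.Prime] (hk0 : 0 < k) (m : ℕ) (b : ℕ → ZMod p) :
    ∃ n ≤ m * p, ReachN (theAdj p k f) 0
      (∑ i ∈ Finset.range m, b i • AdjoinRoot.root f ^ (i + 1)) n := by
  induction m generalizing b with
  | zero => exact ⟨0, Nat.zero_le _, by simpa using reachN_refl _ 0⟩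
  | succ m ih =>
    set ξ := AdjoinRoot.root f with hξ
    obtain ⟨n, hn, hr⟩ := ih (fun i => b (i + 1))
    set u : AdjoinRoot f := ∑ i ∈ Finset.range m, b (i + 1) • ξ ^ (i + 1) with hu
    have hp1 : 0 < p := (Fact.out : p.Prime).pos
    have hval : (b 0).val < p := ZMod.val_lt (b 0)
    have htarget : (∑ i ∈ Finset.range (m + 1), b i • ξ ^ (i + 1))
        = ξ * u + (b 0).val • ξ := by
      rw [Finset.sum_range_succ']
      have h1 : ∑ i ∈ Finset.range m, b (i + 1) • ξ ^ (i + 1 + 1) = ξ * u := by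
        rw [hu, Finset.mul_sum]
        refine Finset.sum_congr rfl fun i _ => ?_
        rw [Algebra.smul_def, Algebra.smul_def]
        ring
      rw [h1]
      congr 1
      rw [pow_one, ← Nat.cast_smul_eq_nsmul (ZMod p), ZMod.natCast_val, ZMod.cast_id]
    by_cases hu0 : u = 0
    · refine ⟨(b 0).val, by nlinarith, ?_⟩
      rw [htarget, hu0, mul_zero, zero_add]
      simpa using reach_add_nsmul p k f hk0 0 (b 0).val
    · refine ⟨n + 1 + (b 0).val, by nlinarith, ?_⟩
      rw [htarget]
      exact reachN_trans _ (reachN_trans _ hr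
        (reachN_single _ (adj_mul_root p k f hk0 u hu0)))
        (reach_add_nsmul p k f hk0 (ξ * u) (b 0).val)

lemma reach_from_zero [Fact p.Prime] [Fact (Irreducible f)]
    (hmonic : f.Monic) (hdeg : f.natDegree = k) (hk : 2 ≤ k) (z : AdjoinRoot f) :
    ∃ n ≤ k * p, ReachN (theAdj p k f) 0 z n := by
  have hk0 : 0 < k := by omega
  set ξ := AdjoinRoot.root f with hξdef
  have hξ0 : ξ ≠ 0 := by
    intro h0
    have hmk : AdjoinRoot.mk f X = 0 := by rw [AdjoinRoot.mk_X]; exact h0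
    have hdvd : f ∣ X := (AdjoinRoot.mk_eq_zero).mp hmk
    have := Polynomial.natDegree_le_of_dvd hdvd (Polynomial.X_ne_zero)
    rw [hdeg, Polynomial.natDegree_X] at this
    omega
  set z' : AdjoinRoot f := ξ⁻¹ * z with hz'
  have hz : z = ξ * z' := by rw [hz', mul_inv_cancel_left₀ hξ0]
  obtain ⟨g, hg⟩ := AdjoinRoot.mk_surjective z'
  have hf1 : f ≠ 1 := by
    intro h
    rw [h, Polynomial.natDegree_one] at hdeg
    omega
  set h := g %ₘ f with hh
  have hdegh : h.natDegree < k := by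
    rw [← hdeg]
    exact Polynomial.natDegree_modByMonic_lt g hmonic hf1
  have hmkh : AdjoinRoot.mk f h = z' := by
    rw [← hg]
    refine AdjoinRoot.mk_eq_mk.mpr ?_
    refine ⟨-(g /ₘ f), ?_⟩
    have := Polynomial.modByMonic_add_div g f
    rw [hh]
    linear_combination this
  have hz'sum : z' = ∑ i ∈ Finset.range k, h.coeff i • ξ ^ i := by
    rw [← hmkh, ← AdjoinRoot.aeval_eq]
    exact Polynomial.aeval_eq_sum_range' hdegh ξ
  have hzsum : z = ∑ i ∈ Finset.range k, h.coeff i • ξ ^ (i + 1) := by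
    rw [hz, hz'sum, Finset.mul_sum]
    refine Finset.sum_congr rfl fun i _ => ?_
    rw [Algebra.smul_def, Algebra.smul_def]
    ring
  obtain ⟨n, hn, hr⟩ := reach_sum p k f hk0 k h.coeff
  exact ⟨n, hn, by rwa [← hzsum] at hr⟩

end Main

/-- If `k ≥ 2`, the diameter of `X_f` is less than `2p(2k+1) − 2k − 4`. -/
theorem stmt_4 (p k : ℕ) [Fact p.Prime] (f : (ZMod p)[X]) [Fact (Irreducible f)]
    (hmonic : f.Monic) (hdeg : f.natDegree = k) (hk : 2 ≤ k) :
    let S : Set (AdjoinRoot f) := {s | ∃ i < k, s = AdjoinRoot.root f ^ p ^ i}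
    let Adj : AdjoinRoot f → AdjoinRoot f → Prop := fun y z =>
      ∃ s ∈ S, z - y = s ∨ y - z = s ∨ (y ≠ 0 ∧ z = s * y) ∨ (z ≠ 0 ∧ y = s * z)
    ∀ y z : AdjoinRoot f, ∃ n : ℕ, n < 2 * p * (2 * k + 1) - 2 * k - 4 ∧
      ∃ c : ℕ → AdjoinRoot f, c 0 = y ∧ c n = z ∧ ∀ i < n, Adj (c i) (c (i + 1)) := by
  intro S Adj y z
  obtain ⟨n1, h1, r1⟩ := reach_from_zero p k f hmonic hdeg hk y
  obtain ⟨n2, h2, r2⟩ := reach_from_zero p k f hmonic hdeg hk z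
  have r1' := reachN_symm _ (theAdj_symm p k f) r1
  have total := reachN_trans _ r1' r2
  have hp2 : 2 ≤ p := (Fact.out : p.Prime).two_le
  have hbound : n1 + n2 < 2 * p * (2 * k + 1) - 2 * k - 4 := by
    have hexp : 2 * p * (2 * k + 1) = 4 * (k * p) + 2 * p := by ring
    have h4 : 2 * k ≤ k * p := by nlinarith
    omega
  exact ⟨n1 + n2, hbound, total⟩
end

section
/- If k ≥ 2, the diameter of the directed graph X⃗_f is at most (p−1)(k² + 4k + 1) + k: for all y, z ∈ K_f there exist n ≤ (p−1)(k² + 4k + 1) + k and a sequence c_0 = y, c_1, …, c_n = z of vertices with a directed edge from c_i to c_{i+1} in X⃗_f for all i. -/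
open Polynomial

private lemma chain_trans {α : Type*} {R : α → α → Prop} {y m z : α} {n₁ n₂ : ℕ}
    (c₁ : ℕ → α) (h10 : c₁ 0 = y) (h1n : c₁ n₁ = m) (h1 : ∀ i < n₁, R (c₁ i) (c₁ (i+1)))
    (c₂ : ℕ → α) (h20 : c₂ 0 = m) (h2n : c₂ n₂ = z) (h2 : ∀ i < n₂, R (c₂ i) (c₂ (i+1))) :
    ∃ c : ℕ → α, c 0 = y ∧ c (n₁ + n₂) = z ∧ ∀ i < n₁ + n₂, R (c i) (c (i+1)) := by
  refine ⟨fun i => if i ≤ n₁ then c₁ i else c₂ (i - n₁), ?_, ?_, ?_⟩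
  · simp [h10]
  · by_cases h : n₁ + n₂ ≤ n₁
    · have hn2 : n₂ = 0 := by omega
      subst hn2
      simp only [Nat.add_zero, if_pos (le_refl n₁), h1n, ← h20]
      exact h2n
    · simp only [if_neg h, show n₁ + n₂ - n₁ = n₂ from by omega, h2n]
  · intro i hi
    by_cases h1' : i + 1 ≤ n₁
    · simp only [if_pos h1', if_pos (by omega : i ≤ n₁)]
      exact h1 i (by omega)
    · simp only [if_neg h1']
      rw [show i + 1 - n₁ = (i - n₁) + 1 from by omega]
      by_cases h3 : i ≤ n₁
      · have hin : i = n₁ := by omega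
        subst hin
        simp only [if_pos h3, h1n, ← h20, Nat.sub_self]
        exact h2 0 (by omega)
      · simp only [if_neg h3]
        exact h2 _ (by omega)

/-- If `k ≥ 2`, the diameter of the directed graph `X⃗_f` is at most
`(p−1)(k² + 4k + 1) + k`. -/
theorem stmt_5 (p k : ℕ) [Fact p.Prime] (f : (ZMod p)[X]) [Fact (Irreducible f)]
    (hmonic : f.Monic) (hdeg : f.natDegree = k) (hk : 2 ≤ k) :
    let S : Set (AdjoinRoot f) := {s | ∃ i < k, s = AdjoinRoot.root f ^ p ^ i}
    let DAdj : AdjoinRoot f → AdjoinRoot f → Prop := fun y z =>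
      ∃ s ∈ S, z - y = s ∨ (y ≠ 0 ∧ z * y⁻¹ = s)
    ∀ y z : AdjoinRoot f, ∃ n : ℕ, n ≤ (p - 1) * (k ^ 2 + 4 * k + 1) + k ∧
      ∃ c : ℕ → AdjoinRoot f, c 0 = y ∧ c n = z ∧ ∀ i < n, DAdj (c i) (c (i + 1)) := by
  intro S DAdj y z
  haveI : NeZero p := ⟨(Fact.out : p.Prime).ne_zero⟩
  have hp2 : 2 ≤ p := (Fact.out : p.Prime).two_le
  set ξ : AdjoinRoot f := AdjoinRoot.root f with hξdef
  -- any single edge of the two allowed kinds (with s = ξ) is a DAdj edge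
  have hedge : ∀ a b : AdjoinRoot f,
      (b - a = ξ ∨ (a ≠ 0 ∧ b * a⁻¹ = ξ)) → DAdj a b := by
    intro a b h
    exact ⟨ξ, ⟨0, by omega, by rw [pow_zero, pow_one]⟩, h⟩
  -- ξ ≠ 0
  have hξ0 : ξ ≠ 0 := by
    intro h
    have hX : (AdjoinRoot.mk f) X = 0 := by rw [AdjoinRoot.mk_X, ← hξdef, h]
    rw [AdjoinRoot.mk_eq_zero] at hX
    have := Polynomial.natDegree_le_of_dvd hX Polynomial.X_ne_zero
    rw [Polynomial.natDegree_X, hdeg] at this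
    omega
  -- multiply by ξ in at most one step
  have chain_mul : ∀ v : AdjoinRoot f, ∃ n ≤ 1, ∃ c : ℕ → AdjoinRoot f,
      c 0 = v ∧ c n = ξ * v ∧ ∀ i < n, DAdj (c i) (c (i+1)) := by
    intro v
    by_cases hv : v = 0
    · exact ⟨0, by omega, fun _ => v, rfl, by simp [hv], by omega⟩
    · refine ⟨1, le_refl 1, fun i => if i = 0 then v else ξ * v, by simp, by simp, ?_⟩
      intro i hi
      have hi0 : i = 0 := by omega
      subst hi0
      simp only [if_pos rfl, if_neg one_ne_zero]
      exact hedge v (ξ * v) (Or.inr ⟨hv, by rw [mul_inv_cancel_right₀ hv]⟩)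
  -- add m copies of ξ in m steps
  have chain_add : ∀ (v : AdjoinRoot f) (m : ℕ), ∃ c : ℕ → AdjoinRoot f,
      c 0 = v ∧ c m = v + m • ξ ∧ ∀ i < m, DAdj (c i) (c (i+1)) := by
    intro v m
    refine ⟨fun i => v + i • ξ, by simp, rfl, ?_⟩
    intro i hi
    apply hedge
    left
    show (v + (i+1) • ξ) - (v + i • ξ) = ξ
    rw [succ_nsmul]
    abel
  -- Horner scheme: from y we can reach ξ^t * y + ∑_{i<t} b (t-1-i) • ξ^(i+1) in ≤ t*p steps
  have horner : ∀ (b : ℕ → ZMod p) (t : ℕ), ∃ n ≤ t * p, ∃ c : ℕ → AdjoinRoot f,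
      c 0 = y ∧ c n = ξ^t * y + ∑ i ∈ Finset.range t, b (t-1-i) • ξ^(i+1) ∧
      ∀ i < n, DAdj (c i) (c (i+1)) := by
    intro b t
    induction t with
    | zero => exact ⟨0, by omega, fun _ => y, rfl, by simp, by omega⟩
    | succ t ih =>
      obtain ⟨n, hn, c, hc0, hcn, hce⟩ := ih
      obtain ⟨n₂, hn₂, c₂, hc20, hc2n, hc2e⟩ := chain_mul (c n)
      obtain ⟨c₃, hc30, hc3n, hc3e⟩ := chain_add (c₂ n₂) (b t).val
      obtain ⟨d, hd0, hdn, hde⟩ := chain_trans c hc0 rfl hce c₂ hc20 hc2n hc2e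
      obtain ⟨e, he0, hen, hee⟩ := chain_trans d hd0 hdn hde c₃ (hc30.trans hc2n) hc3n hc3e
      refine ⟨n + n₂ + (b t).val, ?_, e, he0, ?_, hee⟩
      · have hval : (b t).val < p := ZMod.val_lt (b t)
        have hmul : (t+1) * p = t * p + p := by ring
        omega
      · rw [hen, hc2n, hcn]
        have hsmul : ((b t).val : ℕ) • ξ = (b t) • ξ := by
          rw [← Nat.cast_smul_eq_nsmul (ZMod p), ZMod.natCast_rightInverse (b t)]
        rw [hsmul, Finset.sum_range_succ']
        have hterm : ∀ i ∈ Finset.range t,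
            b (t + 1 - 1 - (i + 1)) • ξ ^ (i + 1 + 1) = ξ * (b (t - 1 - i) • ξ ^ (i + 1)) := by
          intro i _
          rw [show t + 1 - 1 - (i + 1) = t - 1 - i from by omega, mul_smul_comm, ← pow_succ']
        rw [Finset.sum_congr rfl hterm, mul_add, Finset.mul_sum, ← mul_assoc, ← pow_succ']
        simp only [show t + 1 - 1 - 0 = t from by omega, zero_add, pow_one]
        rw [add_assoc]
  -- choose the coefficients b so that the Horner value at t = k equals z
  set w : AdjoinRoot f := (z - ξ^k * y) * ξ⁻¹ with hwdef
  obtain ⟨g, hg⟩ := AdjoinRoot.mk_surjective (g := f) w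
  set q : (ZMod p)[X] := g %ₘ f with hqdef
  have hq : AdjoinRoot.mk f q = w := by
    have hsub : q = g - f * (g /ₘ f) := by
      rw [hqdef, eq_sub_iff_add_eq, Polynomial.modByMonic_add_div g f]
    rw [hsub, map_sub, map_mul, AdjoinRoot.mk_self, zero_mul, sub_zero, hg]
  have hqdeg : q.natDegree < k := by
    by_cases h : q = 0
    · rw [h, Polynomial.natDegree_zero]; omega
    · have hd := Polynomial.degree_modByMonic_lt g hmonic
      have := Polynomial.natDegree_lt_natDegree h hd
      omega
  have hw : w = ∑ i ∈ Finset.range k, q.coeff i • ξ^i := by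
    rw [← hq, ← AdjoinRoot.aeval_eq, Polynomial.aeval_eq_sum_range' hqdeg]
  set b : ℕ → ZMod p := fun j => q.coeff (k - 1 - j) with hb
  obtain ⟨n, hn, c, hc0, hcn, hce⟩ := horner b k
  refine ⟨n, ?_, c, hc0, ?_, hce⟩
  · have hkp : k * p ≤ (p - 1) * (k ^ 2 + 4 * k + 1) + k := by
      have hp1 : 1 ≤ p := by omega
      have h1 : k * p = k * (p - 1) + k := by
        conv_lhs => rw [← Nat.sub_add_cancel hp1]
        rw [Nat.mul_add, Nat.mul_one]
      rw [h1]
      have h2 : k * (p - 1) ≤ (p - 1) * (k ^ 2 + 4 * k + 1) := by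
        rw [mul_comm]
        apply Nat.mul_le_mul_left
        nlinarith
      omega
    omega
  · rw [hcn]
    have hsum : ∑ i ∈ Finset.range k, b (k - 1 - i) • ξ^(i+1) = ξ * w := by
      rw [hw, Finset.mul_sum]
      apply Finset.sum_congr rfl
      intro i hi
      rw [Finset.mem_range] at hi
      simp only [hb]
      rw [show k - 1 - (k - 1 - i) = i from by omega, mul_smul_comm, ← pow_succ']
    rw [hsum, hwdef, mul_comm ξ, mul_assoc, inv_mul_cancel₀ hξ0, mul_one]
    ring
end

section
/- The graphs associated to the fields F_3[x]/(x² + x + 2) and F_3[t]/(t² + 2t + 2) are isomorphic: there exists a bijection φ from (Z/3Z)[x]/(x²+x+2) to (Z/3Z)[t]/(t²+2t+2) such that y and z are adjacent in the first graph if and only if φ(y) and φ(z) are adjacent in the second graph. -/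
open Polynomial

lemma aux_iso {A B : Type*} [CommRing A] [CommRing B] (e : A ≃+* B) (a : A) (c d : B)
    (hac : e a = -c) (hcd : c * d = -1) (hu : ∃ u : A, a * u = 1) (y z : A)
    (h : z - y = a ∨ y - z = a ∨ (y ≠ 0 ∧ z = a * y) ∨ (z ≠ 0 ∧ y = a * z)) :
    ∃ s, (s = c ∨ s = d) ∧
      (e z - e y = s ∨ e y - e z = s ∨ (e y ≠ 0 ∧ e z = s * e y) ∨ (e z ≠ 0 ∧ e y = s * e z)) := by
  obtain ⟨u, hau⟩ := hu
  have hne : ∀ w : A, w ≠ 0 → e w ≠ 0 := fun w hw h0 => hw (e.injective (by simpa using h0))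
  have hmul : ∀ w : A, w ≠ 0 → a * w ≠ 0 := by
    intro w hw h0
    apply hw
    have : u * (a * w) = w := by rw [← mul_assoc, mul_comm u a, hau, one_mul]
    rw [h0, mul_zero] at this
    exact this.symm
  rcases h with h | h | ⟨hy, hz⟩ | ⟨hz, hy⟩
  · have h' := congrArg e h
    rw [map_sub, hac] at h'
    exact ⟨c, Or.inl rfl, Or.inr (Or.inl (by linear_combination -h'))⟩
  · have h' := congrArg e h
    rw [map_sub, hac] at h'
    exact ⟨c, Or.inl rfl, Or.inl (by linear_combination -h')⟩
  · have h' := congrArg e hz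
    rw [map_mul, hac] at h'
    refine ⟨d, Or.inr rfl, Or.inr (Or.inr (Or.inr ⟨hne _ (by rw [hz]; exact hmul _ hy), ?_⟩))⟩
    linear_combination (-d) * h' + (e y) * hcd
  · have h' := congrArg e hy
    rw [map_mul, hac] at h'
    refine ⟨d, Or.inr rfl, Or.inr (Or.inr (Or.inl ⟨hne _ (by rw [hy]; exact hmul _ hz), ?_⟩))⟩
    linear_combination (-d) * h' + (e z) * hcd

/-- The graphs associated to the fields `F₃[x]/(x² + x + 2)` and `F₃[t]/(t² + 2t + 2)`
are isomorphic. -/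
theorem stmt_10 :
    let f : (ZMod 3)[X] := X ^ 2 + X + C 2
    let g : (ZMod 3)[X] := X ^ 2 + 2 * X + C 2
    let S₁ : Set (AdjoinRoot f) := {s | ∃ i < 2, s = AdjoinRoot.root f ^ 3 ^ i}
    let S₂ : Set (AdjoinRoot g) := {s | ∃ i < 2, s = AdjoinRoot.root g ^ 3 ^ i}
    let Adj₁ : AdjoinRoot f → AdjoinRoot f → Prop := fun y z =>
      ∃ s ∈ S₁, z - y = s ∨ y - z = s ∨ (y ≠ 0 ∧ z = s * y) ∨ (z ≠ 0 ∧ y = s * z)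
    let Adj₂ : AdjoinRoot g → AdjoinRoot g → Prop := fun y z =>
      ∃ s ∈ S₂, z - y = s ∨ y - z = s ∨ (y ≠ 0 ∧ z = s * y) ∨ (z ≠ 0 ∧ y = s * z)
    ∃ φ : AdjoinRoot f ≃ AdjoinRoot g,
      ∀ y z : AdjoinRoot f, Adj₁ y z ↔ Adj₂ (φ y) (φ z) := by
  intro f g S₁ S₂ Adj₁ Adj₂
  set ξ := AdjoinRoot.root f with hξdef
  set ρ := AdjoinRoot.root g with hρdef
  -- key relations
  have hξ2 : ξ ^ 2 + ξ + 2 = 0 := by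
    have := AdjoinRoot.eval₂_root f
    simpa [f, eval₂_add, eval₂_pow, eval₂_X, eval₂_C, map_ofNat] using this
  have hρ2 : ρ ^ 2 + 2 * ρ + 2 = 0 := by
    have := AdjoinRoot.eval₂_root g
    simpa [g, eval₂_add, eval₂_mul, eval₂_pow, eval₂_X, eval₂_C, map_ofNat] using this
  -- roots across
  have h3 : (3 : AdjoinRoot g) = 0 := by
    have := congrArg (algebraMap (ZMod 3) (AdjoinRoot g)) (show (3 : ZMod 3) = 0 by decide)
    rw [map_ofNat, map_zero] at this; exact this
  have h3f : (3 : AdjoinRoot f) = 0 := by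
    have := congrArg (algebraMap (ZMod 3) (AdjoinRoot f)) (show (3 : ZMod 3) = 0 by decide)
    rw [map_ofNat, map_zero] at this; exact this
  have h2g : (algebraMap (ZMod 3) (AdjoinRoot g)) 2 = 2 := by
    rw [show (2 : ZMod 3) = 1 + 1 from rfl, map_add, map_one]; norm_num
  have h2f : (algebraMap (ZMod 3) (AdjoinRoot f)) 2 = 2 := by
    rw [show (2 : ZMod 3) = 1 + 1 from rfl, map_add, map_one]; norm_num
  have hf : (aeval (-ρ)) f = 0 := by
    simp only [f, map_add, map_pow, aeval_X, aeval_C]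
    rw [h2g]
    linear_combination hρ2 - ρ * h3
  have hg : (aeval (-ξ)) g = 0 := by
    simp only [g, map_add, map_mul, map_pow, aeval_X, aeval_C, map_ofNat]
    linear_combination hξ2 - ξ * h3f
  let F : AdjoinRoot f →ₐ[ZMod 3] AdjoinRoot g := AdjoinRoot.liftAlgHom f (Algebra.ofId _ _) (-ρ) hf
  let G : AdjoinRoot g →ₐ[ZMod 3] AdjoinRoot f := AdjoinRoot.liftAlgHom g (Algebra.ofId _ _) (-ξ) hg
  have hFroot : F ξ = -ρ := AdjoinRoot.liftAlgHom_root f (Algebra.ofId _ _) (-ρ) hf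
  have hGroot : G ρ = -ξ := AdjoinRoot.liftAlgHom_root g (Algebra.ofId _ _) (-ξ) hg
  have hGF : G.comp F = AlgHom.id _ _ := by
    apply AdjoinRoot.algHom_ext
    simp [AlgHom.comp_apply, ← hξdef, hFroot, hGroot]
  have hFG : F.comp G = AlgHom.id _ _ := by
    apply AdjoinRoot.algHom_ext
    simp [AlgHom.comp_apply, ← hρdef, hFroot, hGroot]
  let E : AdjoinRoot f ≃ₐ[ZMod 3] AdjoinRoot g := AlgEquiv.ofAlgHom F G hFG hGF
  let e : AdjoinRoot f ≃+* AdjoinRoot g := E.toRingEquiv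
  have he : ∀ w, e w = F w := fun w => rfl
  have hes : ∀ w, e.symm w = G w := fun w => rfl
  -- facts about s elements
  have hcd : ρ ^ 3 * ρ = -1 := by linear_combination (ρ ^ 2 + ρ + 2) * hρ2 + (-1 - 2 * ρ - 2 * ρ ^ 2 - ρ ^ 3) * h3
  have hcd' : ξ ^ 3 * ξ = -1 := by linear_combination (ξ ^ 2 + 2 * ξ + 2) * hξ2 + (-1 - 2 * ξ - 2 * ξ ^ 2 - ξ ^ 3) * h3f
  have huξ : ∃ u, ξ * u = 1 := ⟨ξ + 1, by linear_combination hξ2 - h3f⟩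
  have huξ3 : ∃ u, ξ ^ 3 * u = 1 := ⟨-ξ, by linear_combination (-ξ^2 + ξ + 1) * hξ2 + (-ξ - 1) * h3f⟩
  have huρ : ∃ u, ρ * u = 1 := ⟨ρ + 2, by linear_combination hρ2 - h3⟩
  have huρ3 : ∃ u, ρ ^ 3 * u = 1 := ⟨-ρ, by linear_combination (-ρ^2 + 2*ρ + 1) * hρ2 + (-ρ^2 - 2*ρ - 1) * h3⟩
  have heξ : e ξ = -ρ := hFroot
  have heξ3 : e (ξ ^ 3) = -(ρ ^ 3) := by rw [map_pow, heξ]; ring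
  have heρ : e.symm ρ = -ξ := hGroot
  have heρ3 : e.symm (ρ ^ 3) = -(ξ ^ 3) := by rw [map_pow, heρ]; ring
  refine ⟨e.toEquiv, fun y z => ?_⟩
  constructor
  · rintro ⟨s, ⟨i, hi, rfl⟩, h⟩
    interval_cases i
    · rw [pow_zero, pow_one] at h
      obtain ⟨s', hs', h'⟩ := aux_iso e ξ ρ (ρ ^ 3) heξ
        (by linear_combination hcd) huξ y z h
      refine ⟨s', ?_, ?_⟩
      · rcases hs' with rfl | rfl
        · exact ⟨0, by norm_num, (pow_one _).symm⟩
        · exact ⟨1, by norm_num, rfl⟩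
      · exact h'
    · obtain ⟨s', hs', h'⟩ := aux_iso e (ξ ^ 3) (ρ ^ 3) ρ heξ3 hcd huξ3 y z (by exact_mod_cast h)
      refine ⟨s', ?_, ?_⟩
      · rcases hs' with rfl | rfl
        · exact ⟨1, by norm_num, rfl⟩
        · exact ⟨0, by norm_num, (pow_one _).symm⟩
      · exact h'
  · rintro ⟨s, ⟨i, hi, rfl⟩, h⟩
    have hy : e.symm (e.toEquiv y) = y := e.symm_apply_apply y
    have hz : e.symm (e.toEquiv z) = z := e.symm_apply_apply z
    interval_cases i
    · rw [pow_zero, pow_one] at h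
      obtain ⟨s', hs', h'⟩ := aux_iso e.symm ρ ξ (ξ ^ 3) heρ
        (by linear_combination hcd') huρ (e.toEquiv y) (e.toEquiv z) (by exact_mod_cast h)
      rw [hy, hz] at h'
      refine ⟨s', ?_, h'⟩
      rcases hs' with rfl | rfl
      · exact ⟨0, by norm_num, (pow_one _).symm⟩
      · exact ⟨1, by norm_num, rfl⟩
    · obtain ⟨s', hs', h'⟩ := aux_iso e.symm (ρ ^ 3) (ξ ^ 3) ξ heρ3 hcd' huρ3
        (e.toEquiv y) (e.toEquiv z) (by exact_mod_cast h)
      rw [hy, hz] at h'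
      refine ⟨s', ?_, h'⟩
      rcases hs' with rfl | rfl
      · exact ⟨1, by norm_num, rfl⟩
      · exact ⟨0, by norm_num, (pow_one _).symm⟩
end

section
/- Let p be a prime with p ≡ 3 (mod 4) and let l be an integer with 1 ≤ l ≤ p − 1. Define g : (Z/pZ) × (Z/pZ) → ℝ by g(v, w) = 4·cos(2π·l·v̄/p)·cos(2π·l·w̄/p), where v̄, w̄ ∈ {0, 1, …, p−1} are the representatives of v, w. Then g is an eigenfunction of the graph Laplacian of X_f with eigenvalue 8·sin²(π·l/p): for all v, w ∈ Z/pZ, 8·g(v,w) − 2·g(v, w+1) − 2·g(v, w−1) − 2·g(−w, v) − 2·g(w, −v) = 8·sin²(π·l/p)·g(v,w). -/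
open Real

private lemma cos_congr_aux (p l : ℕ) [NeZero p] (m n : ℤ) (h : (m : ZMod p) = n) :
    Real.cos (2 * Real.pi * l * m / p) = Real.cos (2 * Real.pi * l * n / p) := by
  have hmod : m ≡ n [ZMOD p] := (ZMod.intCast_eq_intCast_iff m n p).mp h
  obtain ⟨k, hk⟩ : (p : ℤ) ∣ m - n := Int.ModEq.dvd hmod.symm
  have hm : (m : ℝ) = n + p * k := by
    have : (m : ℝ) - n = p * k := by exact_mod_cast congrArg (Int.cast : ℤ → ℝ) hk
    linarith
  have hp : (p : ℝ) ≠ 0 := Nat.cast_ne_zero.mpr (NeZero.ne p)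
  have : 2 * Real.pi * l * m / p = 2 * Real.pi * l * n / p + (l * k : ℤ) * (2 * Real.pi) := by
    push_cast
    field_simp [hm]
    linear_combination (l : ℝ) * hm
  rw [this, Real.cos_add_int_mul_two_pi]

/-- For a prime `p ≡ 3 (mod 4)` and `1 ≤ l ≤ p − 1`, the function
`g(v, w) = 4·cos(2πl·v̄/p)·cos(2πl·w̄/p)` is an eigenfunction of the graph
Laplacian of `X_f` for `F_p[x]/(x²+1)` with eigenvalue `8·sin²(πl/p)`. -/
theorem stmt_11 (p : ℕ) [Fact p.Prime] (hp : p % 4 = 3)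
    (l : ℕ) (hl1 : 1 ≤ l) (hl2 : l ≤ p - 1)
    (g : ZMod p → ZMod p → ℝ)
    (hg : ∀ v w : ZMod p, g v w =
      4 * Real.cos (2 * Real.pi * l * (v.val : ℝ) / p) *
        Real.cos (2 * Real.pi * l * (w.val : ℝ) / p)) :
    ∀ v w : ZMod p,
      8 * g v w - 2 * g v (w + 1) - 2 * g v (w - 1) - 2 * g (-w) v - 2 * g w (-v)
        = 8 * Real.sin (Real.pi * l / p) ^ 2 * g v w := by
  intro v w
  haveI : NeZero p := ⟨(Fact.out : p.Prime).ne_zero⟩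
  have hp0 : (p : ℝ) ≠ 0 := Nat.cast_ne_zero.mpr (NeZero.ne p)
  have key : ∀ (x : ZMod p) (n : ℤ), ((n : ZMod p) = x) →
      Real.cos (2 * Real.pi * l * (x.val : ℝ) / p)
        = Real.cos (2 * Real.pi * l * (n : ℝ) / p) := by
    intro x n hn
    have hx : ((x.val : ℤ) : ZMod p) = n := by
      rw [hn]; push_cast; simp [ZMod.natCast_val, ZMod.cast_id]
    have := cos_congr_aux p l (x.val : ℤ) n hx
    push_cast at this
    exact this
  have hwv : ((w.val : ℤ) : ZMod p) = w := by push_cast; simp [ZMod.natCast_val, ZMod.cast_id]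
  have hvv : ((v.val : ℤ) : ZMod p) = v := by push_cast; simp [ZMod.natCast_val, ZMod.cast_id]
  have h1 := key (w + 1) ((w.val : ℤ) + 1) (by push_cast [hwv]; ring)
  have h2 := key (w - 1) ((w.val : ℤ) - 1) (by push_cast [hwv]; ring)
  have h3 := key (-w) (-(w.val : ℤ)) (by push_cast [hwv]; ring)
  have h4 := key (-v) (-(v.val : ℤ)) (by push_cast [hvv]; ring)
  push_cast at h1 h2 h3 h4
  have e1 : 2 * Real.pi * l * ((w.val : ℝ) + 1) / p
      = 2 * Real.pi * l * (w.val : ℝ) / p + 2 * Real.pi * l / p := by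
    field_simp
  have e2 : 2 * Real.pi * l * ((w.val : ℝ) - 1) / p
      = 2 * Real.pi * l * (w.val : ℝ) / p - 2 * Real.pi * l / p := by
    field_simp
  have e3 : 2 * Real.pi * l * (-(w.val : ℝ)) / p = -(2 * Real.pi * l * (w.val : ℝ) / p) := by
    ring
  have e4 : 2 * Real.pi * l * (-(v.val : ℝ)) / p = -(2 * Real.pi * l * (v.val : ℝ) / p) := by
    ring
  rw [e1, Real.cos_add] at h1
  rw [e2, Real.cos_sub] at h2
  rw [e3, Real.cos_neg] at h3
  rw [e4, Real.cos_neg] at h4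
  have heig : Real.cos (2 * Real.pi * l / p) = 1 - 2 * Real.sin (Real.pi * l / p) ^ 2 := by
    have e : 2 * Real.pi * l / p = 2 * (Real.pi * l / p) := by ring
    rw [e, Real.cos_two_mul]
    nlinarith [Real.sin_sq_add_cos_sq (Real.pi * l / p)]
  rw [hg v w, hg v (w + 1), hg v (w - 1), hg (-w) v, hg w (-v), h1, h2, h3, h4]
  linear_combination (-16 * Real.cos (2 * Real.pi * l * (v.val : ℝ) / p)
    * Real.cos (2 * Real.pi * l * (w.val : ℝ) / p)) * heig
end

section
/- For every prime p with p ≡ 3 (mod 4), the graph Laplacian of the graph of F_p[x]/(x²+1) has a nonzero eigenfunction orthogonal to the constants whose eigenvalue is at most 8π²/p²: there exists g : (Z/pZ) × (Z/pZ) → ℝ with g not identically zero, with ∑_{v,w} g(v,w) = 0, such that for all v, w ∈ Z/pZ, 8·g(v,w) − 2·g(v, w+1) − 2·g(v, w−1) − 2·g(−w, v) − 2·g(w, −v) = 8·sin²(π/p)·g(v,w), and 8·sin²(π/p) ≤ 8π²/p². In particular the first nontrivial Laplace eigenvalue λ₁ tends to 0 as p → ∞, so this family of graphs is not an expander. -/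
open Real

/-- For every prime `p ≡ 3 (mod 4)`, the Laplacian of the graph of `F_p[x]/(x²+1)`
has a nonzero eigenfunction orthogonal to the constants whose eigenvalue
`8·sin²(π/p)` is at most `8π²/p²`; hence this family of graphs is not an expander. -/
theorem stmt_12 (p : ℕ) [Fact p.Prime] (hp : p % 4 = 3) :
    ∃ g : ZMod p → ZMod p → ℝ,
      g ≠ 0 ∧
      (∑ v : ZMod p, ∑ w : ZMod p, g v w) = 0 ∧
      (∀ v w : ZMod p,
        8 * g v w - 2 * g v (w + 1) - 2 * g v (w - 1) - 2 * g (-w) v - 2 * g w (-v)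
          = 8 * Real.sin (Real.pi / p) ^ 2 * g v w) ∧
      8 * Real.sin (Real.pi / p) ^ 2 ≤ 8 * Real.pi ^ 2 / (p : ℝ) ^ 2 := by
  have hp3 : 3 ≤ p := by omega
  have hpnat : 0 < p := by omega
  have hp0 : (0:ℝ) < p := by exact_mod_cast hpnat
  have hp3' : (3:ℝ) ≤ p := by exact_mod_cast hp3
  have hpne : (p:ℝ) ≠ 0 := ne_of_gt hp0
  haveI : NeZero p := ⟨by omega⟩
  set C : ℤ → ℝ := fun n => Real.cos (2 * π * n / p) with hCdef
  have Cmod : ∀ m n : ℤ, ((m : ZMod p) = (n : ZMod p)) → C m = C n := by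
    intro m n h
    obtain ⟨k, hk⟩ : (p:ℤ) ∣ m - n := by
      rw [ZMod.intCast_eq_intCast_iff] at h
      exact Int.ModEq.dvd h.symm
    have hm : (m:ℝ) = n + p * k := by
      have : (m:ℝ) - n = p * k := by exact_mod_cast congrArg (Int.cast : ℤ → ℝ) hk
      linarith
    simp only [hCdef, hm]
    have : 2 * π * ((n:ℝ) + p * k) / p = 2 * π * n / p + k * (2 * π) := by
      field_simp
    rw [this, Real.cos_add_int_mul_two_pi]
  set c : ZMod p → ℝ := fun w => C (w.val : ℤ) with hcdef
  -- evaluation of c on shifted/negated arguments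
  have hcast : ∀ w : ZMod p, (((w.val : ℤ) : ZMod p)) = w := by
    intro w; simp [ZMod.natCast_val, ZMod.cast_id]
  have hc1 : ∀ w : ZMod p, c (w + 1) = C ((w.val : ℤ) + 1) := by
    intro w; apply Cmod; push_cast [hcast]; rfl
  have hc2 : ∀ w : ZMod p, c (w - 1) = C ((w.val : ℤ) - 1) := by
    intro w; apply Cmod; push_cast [hcast]; rfl
  have hcneg : ∀ w : ZMod p, c (-w) = c w := by
    intro w
    have : c (-w) = C (-(w.val : ℤ)) := by
      apply Cmod; push_cast [hcast]; rfl
    rw [this, hcdef]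
    simp only [hCdef]
    rw [show 2 * π * ((-(w.val : ℤ) : ℤ) : ℝ) / p = -(2 * π * ((w.val : ℤ) : ℝ) / p) by
      push_cast; ring, Real.cos_neg]
  -- the three-term recurrence
  have Ckey : ∀ n : ℤ, C (n + 1) + C (n - 1) = 2 * Real.cos (2 * π / p) * C n := by
    intro n
    simp only [hCdef]
    have h1 : 2 * π * ((n:ℝ) + 1) / p = 2 * π * n / p + 2 * π / p := by ring
    have h2 : 2 * π * ((n:ℝ) - 1) / p = 2 * π * n / p - 2 * π / p := by ring
    push_cast
    rw [h1, h2, Real.cos_add, Real.cos_sub]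
    ring
  have ckey : ∀ w : ZMod p, c (w + 1) + c (w - 1) = 2 * Real.cos (2 * π / p) * c w := by
    intro w; rw [hc1, hc2]; exact Ckey _
  -- cos (2π/p) < 1
  have hcoslt : Real.cos (2 * π / p) < 1 := by
    have h1 : 0 < 2 * π / p := by positivity
    have h2 : 2 * π / p ≤ π := by
      rw [div_le_iff₀ hp0]
      nlinarith [Real.pi_pos]
    calc Real.cos (2 * π / p) < Real.cos 0 := by
          apply Real.cos_lt_cos_of_nonneg_of_le_pi le_rfl h2 h1
      _ = 1 := Real.cos_zero
  -- sum of c is zero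
  have hsum : (∑ v : ZMod p, c v) = 0 := by
    have hshift : ∀ a : ZMod p, (∑ v : ZMod p, c (v + a)) = ∑ v : ZMod p, c v := by
      intro a
      exact Fintype.sum_equiv (Equiv.addRight a) _ _ (fun v => rfl)
    have := Finset.sum_congr rfl (fun v (_ : v ∈ Finset.univ) => ckey v)
    rw [Finset.sum_add_distrib] at this
    have e1 : (∑ v : ZMod p, c (v - 1)) = ∑ v : ZMod p, c v := by
      simpa [sub_eq_add_neg] using hshift (-1)
    rw [hshift 1, e1, ← Finset.mul_sum] at this
    nlinarith [this]
  -- relation cos(2π/p) = 1 - 2 sin²(π/p)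
  have hcos2 : Real.cos (2 * π / p) = 1 - 2 * Real.sin (π / p) ^ 2 := by
    rw [show 2 * π / p = 2 * (π / p) by ring, Real.cos_two_mul, Real.cos_sq']
    ring
  refine ⟨fun v w => c v * c w, ?_, ?_, ?_, ?_⟩
  · intro h
    have h00 := congrFun (congrFun h 0) 0
    have hc0 : c 0 = 1 := by
      simp [hcdef, hCdef, ZMod.val_zero]
    simp [hc0] at h00
  · rw [← Finset.sum_mul_sum, hsum, zero_mul]
  · intro v w
    dsimp only
    rw [hcneg w, hcneg v]
    have hk := ckey w
    linear_combination (-2 * c v) * hk + (-4 * c v * c w) * hcos2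
  · have hx0 : (0:ℝ) ≤ π / p := by positivity
    have hxle : π / p ≤ π := by
      rw [div_le_iff₀ hp0]; nlinarith [Real.pi_pos]
    have hs0 : 0 ≤ Real.sin (π / p) := Real.sin_nonneg_of_nonneg_of_le_pi hx0 hxle
    have hsle : Real.sin (π / p) ≤ π / p := Real.sin_le hx0
    have : Real.sin (π / p) ^ 2 ≤ (π / p) ^ 2 := by nlinarith
    rw [div_pow] at this
    rw [show 8 * π ^ 2 / (p:ℝ) ^ 2 = 8 * (π ^ 2 / (p:ℝ) ^ 2) by ring]
    nlinarith [this]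
end

section
/- If k ≥ 2, the first nontrivial Laplace eigenvalue of X_f satisfies λ₁ ≥ 1/(p^{k+1}(2k+1)), stated via the quadratic form: for every function g : K_f → ℝ with ∑_{y ∈ K_f} g(y) = 0, one has ∑_{y ∈ K_f} ∑_{s ∈ S} (g(y+s) − g(y))² + ∑_{y ∈ K_f, y ≠ 0} ∑_{s ∈ S} (g(s·y) − g(y))² ≥ (1/(p^{k+1}(2k+1))) · ∑_{y ∈ K_f} g(y)². -/
open Polynomial

section WalkLemmas

variable {K : Type*}

/-- One step of the Cayley-type graph `X_f`. -/
def Rstep [Ring K] (S : Finset K) (u v : K) : Prop :=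
  (∃ s ∈ S, v = u + s) ∨ (∃ s ∈ S, u ≠ 0 ∧ v = s * u)

/-- Sum of squared increments of `g` along a walk. -/
def pathSum (g : K → ℝ) : K → List K → ℝ
  | _, [] => 0
  | a, b :: l => (g b - g a) ^ 2 + pathSum g b l

lemma pathSum_nonneg (g : K → ℝ) : ∀ (l : List K) (a : K), 0 ≤ pathSum g a l
  | [], _ => le_refl _
  | b :: l, _ => add_nonneg (sq_nonneg _) (pathSum_nonneg g l b)

lemma getLastD_append' (l₁ l₂ : List K) (d : K) :
    (l₁ ++ l₂).getLastD d = l₂.getLastD (l₁.getLastD d) := by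
  induction l₁ generalizing d with
  | nil => rfl
  | cons c t ih =>
      rw [List.cons_append, List.getLastD_cons, ih, List.getLastD_cons]

/-- Cauchy–Schwarz along a walk. -/
lemma pathSum_cs (g : K → ℝ) : ∀ (l : List K) (a : K),
    (g (l.getLastD a) - g a) ^ 2 ≤ (l.length : ℝ) * pathSum g a l
  | [], a => by simp [pathSum]
  | b :: t, a => by
      have hx := pathSum_cs g t b
      have hP := pathSum_nonneg g t b
      rw [List.getLastD_cons]
      show _ ≤ ((b :: t).length : ℝ) * ((g b - g a) ^ 2 + pathSum g b t)
      rcases t with _ | ⟨c, t'⟩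
      · show (g b - g a) ^ 2 ≤ (([b].length : ℕ) : ℝ) * ((g b - g a) ^ 2 + pathSum g b [])
        show (g b - g a) ^ 2 ≤ (([b].length : ℕ) : ℝ) * ((g b - g a) ^ 2 + 0)
        norm_num
      · set n : ℝ := (((c :: t').length : ℕ) : ℝ) with hn
        have hn1 : (1 : ℝ) ≤ n := by
          rw [hn]; exact_mod_cast Nat.succ_le_succ (Nat.zero_le _)
        set x := g ((c :: t').getLastD b) - g b with hxdef
        set y := g b - g a with hydef
        set P := pathSum g b (c :: t') with hPdef
        have hx' : x ^ 2 ≤ n * P := hx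
        have key : (x + y) ^ 2 * n ≤ ((n + 1) * (y ^ 2 + P)) * n := by
          nlinarith [sq_nonneg (x - n * y),
            mul_le_mul_of_nonneg_left hx' (by linarith : (0:ℝ) ≤ n + 1)]
        have hfin : (x + y) ^ 2 ≤ (n + 1) * (y ^ 2 + P) :=
          le_of_mul_le_mul_right key (by linarith)
        have : g ((c :: t').getLastD b) - g a = x + y := by rw [hxdef, hydef]; ring
        rw [this]
        have hlen : (((b :: c :: t').length : ℕ) : ℝ) = n + 1 := by
          rw [hn]; push_cast [List.length_cons]; ring
        rw [hlen]
        exact hfin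

lemma chain_append' {R : K → K → Prop} :
    ∀ (l₁ : List K) (a : K), List.Chain R a l₁ → ∀ l₂ : List K,
      List.Chain R (l₁.getLastD a) l₂ → List.Chain R a (l₁ ++ l₂)
  | [], _, _, _, h₂ => h₂
  | b :: t, a, h₁, l₂, h₂ => by
      unfold List.Chain at h₁ ⊢
      rw [List.chain_cons] at h₁
      rw [List.cons_append, List.chain_cons]
      exact ⟨h₁.1, chain_append' t b h₁.2 l₂ (by rwa [List.getLastD_cons] at h₂)⟩

/-- Loop erasure: any walk contains a vertex-distinct walk with the same endpoints. -/
lemma erase_loops {R : K → K → Prop} [DecidableEq K] :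
    ∀ (n : ℕ) (l : List K) (a : K), l.length ≤ n → List.Chain R a l →
      ∃ l' : List K, List.Chain R a l' ∧ (a :: l').Nodup ∧
        l'.length ≤ l.length ∧ l'.getLastD a = l.getLastD a ∧ l' ⊆ l := by
  intro n
  induction n with
  | zero =>
      intro l a hl _
      rw [Nat.le_zero, List.length_eq_zero_iff] at hl
      subst hl
      exact ⟨[], List.Chain.nil, by simp, le_refl _, rfl, by simp⟩
  | succ n ih =>
      intro l a hl hch
      by_cases hmem : a ∈ l
      · obtain ⟨l₁, l₂, rfl⟩ := List.append_of_mem hmem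
        have hch₂ : List.Chain R a l₂ := (List.isChain_cons_split.mp hch).2
        have hlen : l₂.length ≤ n := by
          rw [List.length_append, List.length_cons] at hl; omega
        obtain ⟨l', h1, h2, h5, h3, h4⟩ := ih l₂ a hlen hch₂
        refine ⟨l', h1, h2, ?_, ?_, ?_⟩
        · rw [List.length_append, List.length_cons]; omega
        · rw [h3, getLastD_append', List.getLastD_cons]
        · intro x hx
          rw [List.mem_append, List.mem_cons]
          exact Or.inr (Or.inr (h4 hx))
      · cases l with
        | nil => exact ⟨[], List.Chain.nil, by simp, le_refl _, rfl, by simp⟩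
        | cons b t =>
            unfold List.Chain at hch
            rw [List.chain_cons] at hch
            have hlt : t.length ≤ n := by
              rw [List.length_cons] at hl; omega
            obtain ⟨l', h1, h2, h5, h3, h4⟩ := ih t b hlt hch.2
            refine ⟨b :: l', List.chain_cons.mpr ⟨hch.1, h1⟩, ?_, ?_, ?_, ?_⟩
            · rw [List.nodup_cons]
              refine ⟨?_, h2⟩
              intro hax
              apply hmem
              rcases List.mem_cons.mp hax with h | h
              · exact h ▸ List.mem_cons_self
              · exact List.mem_cons_of_mem _ (h4 h)
            · rw [List.length_cons, List.length_cons]; omega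
            · rw [List.getLastD_cons, List.getLastD_cons, h3]
            · exact List.cons_subset_cons _ h4

variable [CommRing K] [DecidableEq K]

/-- The local energy at a vertex `u`. -/
def qf (S : Finset K) (g : K → ℝ) (u : K) : ℝ :=
  (∑ s ∈ S, (g (u + s) - g u) ^ 2) +
    if u ≠ 0 then ∑ s ∈ S, (g (s * u) - g u) ^ 2 else 0

lemma qf_nonneg (S : Finset K) (g : K → ℝ) (u : K) : 0 ≤ qf S g u := by
  unfold qf
  have h1 : (0:ℝ) ≤ ∑ s ∈ S, (g (u + s) - g u) ^ 2 :=
    Finset.sum_nonneg fun s _ => sq_nonneg _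
  have h2 : (0:ℝ) ≤ if u ≠ 0 then ∑ s ∈ S, (g (s * u) - g u) ^ 2 else 0 := by
    split_ifs
    · exact Finset.sum_nonneg fun s _ => sq_nonneg _
    · exact le_refl _
  linarith

lemma step_le_qf {S : Finset K} {g : K → ℝ} {u v : K} (h : Rstep S u v) :
    (g v - g u) ^ 2 ≤ qf S g u := by
  rcases h with ⟨s, hs, rfl⟩ | ⟨s, hs, hu, rfl⟩
  · have h1 : (g (u + s) - g u) ^ 2 ≤ ∑ s ∈ S, (g (u + s) - g u) ^ 2 :=
      Finset.single_le_sum (f := fun t => (g (u + t) - g u) ^ 2) (fun i _ => sq_nonneg _) hs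
    have h2 : (0:ℝ) ≤ if u ≠ 0 then ∑ s ∈ S, (g (s * u) - g u) ^ 2 else 0 := by
      split_ifs
      · exact Finset.sum_nonneg fun s _ => sq_nonneg _
      · exact le_refl _
    unfold qf; linarith
  · have h1 : (g (s * u) - g u) ^ 2 ≤ ∑ s ∈ S, (g (s * u) - g u) ^ 2 :=
      Finset.single_le_sum (f := fun t => (g (t * u) - g u) ^ 2) (fun i _ => sq_nonneg _) hs
    have h2 : (0:ℝ) ≤ ∑ s ∈ S, (g (u + s) - g u) ^ 2 :=
      Finset.sum_nonneg fun s _ => sq_nonneg _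
    unfold qf
    rw [if_pos hu]
    linarith

lemma pathSum_le_qsum {S : Finset K} {g : K → ℝ} :
    ∀ (l : List K) (a : K), List.Chain (Rstep S) a l → (a :: l).Nodup →
      pathSum g a l ≤ ∑ u ∈ (a :: l).toFinset, qf S g u
  | [], a, _, _ => by
      show (0:ℝ) ≤ _
      exact Finset.sum_nonneg fun u _ => qf_nonneg S g u
  | b :: l, a, hch, hnd => by
      unfold List.Chain at hch
      rw [List.chain_cons] at hch
      rw [List.nodup_cons] at hnd
      have hsub := pathSum_le_qsum (S := S) (g := g) l b hch.2 hnd.2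
      show (g b - g a) ^ 2 + pathSum g b l ≤ _
      have hins : (a :: b :: l).toFinset = insert a ((b :: l).toFinset) := by
        simp [List.toFinset_cons]
      rw [hins, Finset.sum_insert (by rw [List.mem_toFinset]; exact hnd.1)]
      exact add_le_add (step_le_qf hch.1) hsub

/-- The abstract spectral bound from short walks to every vertex. -/
lemma sum_sq_le [Fintype K] (S : Finset K) (g : K → ℝ) (L : ℕ)
    (hreach : ∀ y : K, ∃ l : List K, List.Chain (Rstep S) 0 l ∧
      l.length ≤ L ∧ l.getLastD 0 = y)
    (hg : ∑ y : K, g y = 0) :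
    ∑ y : K, g y ^ 2 ≤ (Fintype.card K : ℝ) * ((L : ℝ) * ∑ u : K, qf S g u) := by
  set Q := ∑ u : K, qf S g u with hQdef
  have hQ0 : 0 ≤ Q := Finset.sum_nonneg fun u _ => qf_nonneg S g u
  have hbound : ∀ y : K, (g y - g 0) ^ 2 ≤ (L : ℝ) * Q := by
    intro y
    obtain ⟨l, hch, hlen, hend⟩ := hreach y
    obtain ⟨l', h1, h2, hlen', h3, _⟩ := erase_loops l.length l 0 (le_refl _) hch
    have hcs := pathSum_cs g l' 0
    rw [h3, hend] at hcs
    have h4 : pathSum g 0 l' ≤ Q := by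
      refine le_trans (pathSum_le_qsum l' 0 h1 h2) ?_
      exact Finset.sum_le_sum_of_subset_of_nonneg (Finset.subset_univ _)
        (fun u _ _ => qf_nonneg S g u)
    calc (g y - g 0) ^ 2 ≤ (l'.length : ℝ) * pathSum g 0 l' := hcs
      _ ≤ (L : ℝ) * Q := by
          apply mul_le_mul ?_ h4 (pathSum_nonneg g l' 0) (Nat.cast_nonneg _)
          exact_mod_cast le_trans hlen' hlen
  have key : ∑ y : K, (g y - g 0) ^ 2 ≤ (Fintype.card K : ℝ) * ((L : ℝ) * Q) := by
    have := Finset.sum_le_card_nsmul Finset.univ (fun y => (g y - g 0) ^ 2)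
      ((L : ℝ) * Q) (fun y _ => hbound y)
    rwa [Finset.card_univ, nsmul_eq_mul] at this
  have expand : ∑ y : K, (g y - g 0) ^ 2
      = ∑ y : K, g y ^ 2 + (Fintype.card K : ℝ) * g 0 ^ 2 := by
    have hpt : ∀ y : K, (g y - g 0) ^ 2 = g y ^ 2 - (2 * g 0) * g y + g 0 ^ 2 := by
      intro y; ring
    simp_rw [hpt]
    rw [Finset.sum_add_distrib, Finset.sum_sub_distrib, ← Finset.mul_sum, hg, mul_zero,
      sub_zero, Finset.sum_const, Finset.card_univ, nsmul_eq_mul]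
  have hc0 : (0:ℝ) ≤ (Fintype.card K : ℝ) * g 0 ^ 2 := by positivity
  linarith [key, expand.symm.le]

end WalkLemmas

section AdjoinRootWalks

variable {p k : ℕ} [Fact p.Prime] {f : (ZMod p)[X]} [Fact (Irreducible f)]

lemma reach_adjoin (hmonic : f.Monic) (hdeg : f.natDegree = k) (hk : 2 ≤ k)
    (S : Finset (AdjoinRoot f)) (hξS : AdjoinRoot.root f ∈ S) :
    ∀ y : AdjoinRoot f, ∃ l : List (AdjoinRoot f),
      List.Chain (Rstep S) 0 l ∧ l.length ≤ k * p ∧ l.getLastD 0 = y := by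
  have hp : p.Prime := Fact.out
  haveI : NeZero p := ⟨hp.pos.ne'⟩
  have hf0 : f ≠ 0 := (Fact.out : Irreducible f).ne_zero
  set ξ := AdjoinRoot.root f with hξdef
  -- casting ZMod p values
  have hcast : ∀ a : ZMod p, ((a.val : ℕ) : AdjoinRoot f) = AdjoinRoot.of f a := by
    intro a
    rw [← map_natCast (AdjoinRoot.of f) a.val, ZMod.natCast_val, ZMod.cast_id]
  have hsmul : ∀ (a : ZMod p) (u : AdjoinRoot f),
      a.val • u = AdjoinRoot.of f a * u := by
    intro a u
    rw [nsmul_eq_mul, hcast]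
  -- walks consisting of repeated additions of ξ
  have addwalk : ∀ (u : AdjoinRoot f) (t : ℕ), ∃ l : List (AdjoinRoot f),
      List.Chain (Rstep S) u l ∧ l.length = t ∧ l.getLastD u = u + t • ξ := by
    intro u t
    induction t with
    | zero => exact ⟨[], List.Chain.nil, rfl, by simp⟩
    | succ t iht =>
        obtain ⟨l, h1, h2, h3⟩ := iht
        refine ⟨l ++ [u + (t + 1) • ξ], ?_, by simp [h2], ?_⟩
        · apply chain_append' l u h1
          rw [h3]
          refine List.chain_cons.mpr ⟨Or.inl ⟨ξ, hξS, ?_⟩, List.Chain.nil⟩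
          rw [succ_nsmul, ← add_assoc]
        · rw [getLastD_append']
          rfl
  -- the Horner walk
  have horner : ∀ m : ℕ, ∀ q : (ZMod p)[X], q.natDegree < m →
      ∃ l : List (AdjoinRoot f), List.Chain (Rstep S) 0 l ∧ l.length ≤ m * p ∧
        l.getLastD 0 = ξ * AdjoinRoot.mk f q := by
    intro m
    induction m with
    | zero => intro q hq; omega
    | succ m ihm =>
        intro q hq
        by_cases hc : q.divX = 0
        · have hqC : q = C (q.coeff 0) := Polynomial.divX_eq_zero_iff.mp hc
          obtain ⟨l, h1, h2, h3⟩ := addwalk 0 ((q.coeff 0).val)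
          refine ⟨l, h1, ?_, ?_⟩
          · have hv := ZMod.val_lt (q.coeff 0)
            have : p ≤ (m + 1) * p := Nat.le_mul_of_pos_left p (by omega)
            omega
          · rw [h3, zero_add, hsmul]
            conv_rhs => rw [hqC]
            rw [AdjoinRoot.mk_C]
            ring
        · have hq0 : q ≠ 0 := fun h => hc (by simp [h])
          have hd1 : 1 ≤ q.natDegree := by
            by_contra h
            push_neg at h
            exact hc (Polynomial.divX_eq_zero_iff.mpr
              (Polynomial.eq_C_of_natDegree_eq_zero (by omega)))
          have hqd : q.divX.natDegree < m := by
            rw [Polynomial.natDegree_divX_eq_natDegree_tsub_one]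
            omega
          obtain ⟨l, h1, h2, h3⟩ := ihm q.divX hqd
          set w := ξ * AdjoinRoot.mk f q.divX with hw
          have hstep : ∃ l₂ : List (AdjoinRoot f), List.Chain (Rstep S) 0 l₂ ∧
              l₂.length ≤ m * p + 1 ∧ l₂.getLastD 0 = ξ * w := by
            by_cases hw0 : w = 0
            · exact ⟨l, h1, by omega, by rw [h3, hw0, mul_zero]⟩
            · refine ⟨l ++ [ξ * w], ?_, ?_, ?_⟩
              · apply chain_append' l 0 h1
                rw [h3]
                exact List.chain_cons.mpr ⟨Or.inr ⟨ξ, hξS, hw0, rfl⟩, List.Chain.nil⟩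
              · rw [List.length_append]; simp; omega
              · rw [getLastD_append']; rfl
          obtain ⟨l₂, h1', h2', h3'⟩ := hstep
          obtain ⟨l₃, g1, g2, g3⟩ := addwalk (ξ * w) ((q.coeff 0).val)
          refine ⟨l₂ ++ l₃, ?_, ?_, ?_⟩
          · apply chain_append' l₂ 0 h1'
            rw [h3']
            exact g1
          · rw [List.length_append, g2, Nat.succ_mul]
            have hv := ZMod.val_lt (q.coeff 0)
            omega
          · rw [getLastD_append', h3', g3, hsmul]
            have hmkq : AdjoinRoot.mk f q
                = ξ * AdjoinRoot.mk f q.divX + AdjoinRoot.of f (q.coeff 0) := by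
              conv_lhs => rw [← Polynomial.X_mul_divX_add q]
              rw [map_add, map_mul, AdjoinRoot.mk_X, AdjoinRoot.mk_C]
            rw [hmkq, hw]
            ring
  -- ξ is nonzero
  have hξ0 : ξ ≠ 0 := by
    intro h
    have hdvd : f ∣ X := AdjoinRoot.mk_eq_zero.mp (by rw [AdjoinRoot.mk_X]; exact h)
    have hle := Polynomial.degree_le_of_dvd hdvd Polynomial.X_ne_zero
    rw [Polynomial.degree_X, Polynomial.degree_eq_natDegree hf0, hdeg] at hle
    have : k ≤ 1 := by exact_mod_cast hle
    omega
  intro y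
  obtain ⟨q₀, hq₀⟩ := AdjoinRoot.mk_surjective (ξ⁻¹ * y)
  have hdeg' : (q₀ %ₘ f).natDegree < k := by
    have hlt := Polynomial.degree_modByMonic_lt q₀ hmonic
    by_cases h0 : q₀ %ₘ f = 0
    · rw [h0]; simpa using (by omega : 0 < k)
    · rw [Polynomial.natDegree_lt_iff_degree_lt h0]
      rw [Polynomial.degree_eq_natDegree hf0, hdeg] at hlt
      exact hlt
  obtain ⟨l, h1, h2, h3⟩ := horner k (q₀ %ₘ f) hdeg'
  refine ⟨l, h1, h2, ?_⟩
  rw [h3]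
  have hmk : AdjoinRoot.mk f (q₀ %ₘ f) = AdjoinRoot.mk f q₀ := by
    conv_rhs => rw [← Polynomial.modByMonic_add_div q₀ f]
    rw [map_add, map_mul, AdjoinRoot.mk_self, zero_mul, add_zero]
  rw [hmk, hq₀, ← mul_assoc, mul_inv_cancel₀ hξ0, one_mul]

end AdjoinRootWalks

/-- If `k ≥ 2`, the first nontrivial Laplace eigenvalue of `X_f` satisfies
`λ₁ ≥ 1/(p^{k+1}(2k+1))`, stated via the Laplacian quadratic form. -/
theorem stmt_13 (p k : ℕ) [Fact p.Prime] (f : (ZMod p)[X]) [Fact (Irreducible f)]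
    [Fintype (AdjoinRoot f)] [DecidableEq (AdjoinRoot f)]
    (hmonic : f.Monic) (hdeg : f.natDegree = k) (hk : 2 ≤ k) :
    let S : Finset (AdjoinRoot f) :=
      (Finset.range k).image (fun i => AdjoinRoot.root f ^ p ^ i)
    ∀ g : AdjoinRoot f → ℝ, (∑ y : AdjoinRoot f, g y) = 0 →
      (∑ y : AdjoinRoot f, ∑ s ∈ S, (g (y + s) - g y) ^ 2)
        + (∑ y ∈ Finset.univ.filter (fun y : AdjoinRoot f => y ≠ 0),
            ∑ s ∈ S, (g (s * y) - g y) ^ 2)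
        ≥ (1 / ((p : ℝ) ^ (k + 1) * (2 * (k : ℝ) + 1))) * ∑ y : AdjoinRoot f, g y ^ 2 := by
  intro S g hg
  have hp : p.Prime := Fact.out
  haveI : NeZero p := ⟨hp.pos.ne'⟩
  have hf0 : f ≠ 0 := (Fact.out : Irreducible f).ne_zero
  have hξS : AdjoinRoot.root f ∈ S := by
    show AdjoinRoot.root f ∈ (Finset.range k).image (fun i => AdjoinRoot.root f ^ p ^ i)
    refine Finset.mem_image.mpr ⟨0, Finset.mem_range.mpr (by omega), by simp⟩
  have hreach := reach_adjoin hmonic hdeg hk S hξS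
  have habs := sum_sq_le S g (k * p) hreach hg
  have hcard : Fintype.card (AdjoinRoot f) = p ^ k := by
    have hpb := Module.card_fintype (AdjoinRoot.powerBasis hf0).basis
    rw [ZMod.card, Fintype.card_fin, AdjoinRoot.powerBasis_dim, hdeg] at hpb
    exact hpb
  -- identify the quadratic form with ∑ qf
  have hQ : (∑ y : AdjoinRoot f, ∑ s ∈ S, (g (y + s) - g y) ^ 2)
        + (∑ y ∈ Finset.univ.filter (fun y : AdjoinRoot f => y ≠ 0),
            ∑ s ∈ S, (g (s * y) - g y) ^ 2)
      = ∑ u : AdjoinRoot f, qf S g u := by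
    unfold qf
    rw [Finset.sum_add_distrib]
    congr 1
    rw [Finset.sum_filter]
  rw [ge_iff_le, hQ]
  set Q := ∑ u : AdjoinRoot f, qf S g u with hQdef
  have hQ0 : 0 ≤ Q := Finset.sum_nonneg fun u _ => qf_nonneg S g u
  rw [hcard] at habs
  push_cast at habs
  have hp0 : (0:ℝ) < (p : ℝ) := by exact_mod_cast hp.pos
  have hC : (0:ℝ) < (p : ℝ) ^ (k + 1) * (2 * (k : ℝ) + 1) := by positivity
  rw [div_mul_eq_mul_div, one_mul, div_le_iff₀ hC]
  have hsplit : (p : ℝ) ^ (k + 1) = (p : ℝ) ^ k * (p : ℝ) := pow_succ _ _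
  rw [hsplit]
  have hextra : (0:ℝ) ≤ (p : ℝ) ^ k * (p : ℝ) * Q * ((k : ℝ) + 1) := by positivity
  nlinarith [habs, hextra]
end
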